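/- Let v be a subharmonic function on a rectangle P = (-a,a) × (-b,b) in ℝ², and let M̃ : (-b,b) → ℝ be a measurable function with ∫_{-b}^{b} log⁺ M̃(y) dy < ∞, such that v(x,y) ≤ M̃(y) for all (x,y) ∈ P. Then for every compact set K ⊂ P there is a constant C, depending only on M̃ and the distance d(K, ∂P), such that sup_K v ≤ C. -/

import Mathlib

open MeasureTheory

/-- `log⁺ x = max (log x) 0`. -/
noncomputable def logPlus (x : ℝ) : ℝ := max (Real.log x) 0

/-- The open rectangle `(-a,a) × (-b,b)` viewed as a subset of `ℂ`. -/
def Rect (a b : ℝ) : Set ℂ := {z | |z.re| < a ∧ |z.im| < b}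

/-- A function is subharmonic on `s` if it is upper semicontinuous on `s` and satisfies
the sub-mean-value inequality on closed disks contained in `s`. -/
def SubharmonicOn (v : ℂ → ℝ) (s : Set ℂ) : Prop :=
  UpperSemicontinuousOn v s ∧
    ∀ z r, 0 < r → Metric.closedBall z r ⊆ s →
      v z ≤ ⨍ w in Metric.closedBall z r, v w

open Metric Filter
open scoped ENNReal NNReal Topology

lemma vol_reim {s t : Set ℝ} (hs : MeasurableSet s) (ht : MeasurableSet t) :
    volume {z : ℂ | z.re ∈ s ∧ z.im ∈ t} = volume s * volume t := by
  have h1 : {z : ℂ | z.re ∈ s ∧ z.im ∈ t} = Complex.measurableEquivRealProd ⁻¹' (s ×ˢ t) := rfl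
  rw [h1, Complex.volume_preserving_equiv_real_prod.measure_preimage
    (hs.prod ht).nullMeasurableSet, Measure.volume_eq_prod, Measure.prod_prod]

lemma sum_vol_ne_top (b : ℝ) (Mt : ℝ → ℝ) (hMmeas : Measurable Mt)
    (hMint : IntegrableOn (fun y => logPlus (Mt y)) (Set.Ioo (-b) b)) :
    ∑' n : ℕ, volume ({y | (2:ℝ)^n < Mt y} ∩ Set.Ioo (-b) b) ≠ ∞ := by
  set μ := volume.restrict (Set.Ioo (-b : ℝ) b) with hμ
  have hA : ∀ n : ℕ, MeasurableSet {y : ℝ | (2:ℝ)^n < Mt y} := fun n =>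
    measurableSet_lt measurable_const hMmeas
  have hres : ∀ n : ℕ, volume ({y | (2:ℝ)^n < Mt y} ∩ Set.Ioo (-b) b)
      = μ {y | (2:ℝ)^n < Mt y} := fun n => (Measure.restrict_apply (hA n)).symm
  have hfin : Integrable (fun y => logPlus (Mt y) / Real.log 2 + 1) μ := by
    refine (hMint.div_const _).add ?_
    exact integrableOn_const (C := (1:ℝ)) measure_Ioo_lt_top.ne
  have hI : ∫⁻ y, ENNReal.ofReal (logPlus (Mt y) / Real.log 2 + 1) ∂μ < ∞ :=
    hfin.lintegral_lt_top
  have hbound : ∀ (S : Finset ℕ),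
      ∑ n ∈ S, μ {y : ℝ | (2:ℝ)^n < Mt y}
        ≤ ∫⁻ y, ENNReal.ofReal (logPlus (Mt y) / Real.log 2 + 1) ∂μ := by
    intro S
    have : ∑ n ∈ S, μ {y : ℝ | (2:ℝ)^n < Mt y}
        = ∫⁻ y, ∑ n ∈ S, Set.indicator {y : ℝ | (2:ℝ)^n < Mt y} (fun _ => (1:ℝ≥0∞)) y ∂μ := by
      rw [lintegral_finset_sum]
      · refine Finset.sum_congr rfl fun n _ => ?_
        exact (lintegral_indicator_one (hA n)).symm
      · exact fun n _ => measurable_one.indicator (hA n)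
    rw [this]
    refine lintegral_mono fun y => ?_
    set L : ℝ := logPlus (Mt y) / Real.log 2 with hL
    have hLnn : 0 ≤ L := div_nonneg (le_max_right _ _) (Real.log_nonneg one_le_two)
    have hsub : S.filter (fun n => (2:ℝ)^n < Mt y) ⊆ Finset.range (Nat.floor L + 1) := by
      intro n hn
      rw [Finset.mem_filter] at hn
      have h2n : (2:ℝ)^n < Mt y := hn.2
      have hpos : (0:ℝ) < (2:ℝ)^n := by positivity
      have hlog : (n : ℝ) * Real.log 2 < Real.log (Mt y) := by
        calc (n : ℝ) * Real.log 2 = Real.log ((2:ℝ)^n) := by rw [Real.log_pow]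
        _ < Real.log (Mt y) := Real.log_lt_log hpos h2n
      have hlogle : Real.log (Mt y) ≤ logPlus (Mt y) := le_max_left _ _
      have h2 : (0:ℝ) < Real.log 2 := Real.log_pos one_lt_two
      have : (n : ℝ) ≤ L := by
        rw [hL, le_div_iff₀ h2]
        linarith
      have : n ≤ Nat.floor L := Nat.le_floor this
      simp [Finset.mem_range]; omega
    calc ∑ n ∈ S, Set.indicator {y : ℝ | (2:ℝ)^n < Mt y} (fun _ => (1:ℝ≥0∞)) y
        = ∑ n ∈ S.filter (fun n => (2:ℝ)^n < Mt y), 1 := by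
          rw [Finset.sum_filter]
          refine Finset.sum_congr rfl fun n _ => ?_
          by_cases h : (2:ℝ)^n < Mt y <;> simp [Set.indicator, h]
      _ ≤ ∑ n ∈ Finset.range (Nat.floor L + 1), 1 := Finset.sum_le_sum_of_subset hsub
      _ = ((Nat.floor L + 1 : ℕ) : ℝ≥0∞) := by simp
      _ ≤ ENNReal.ofReal (L + 1) := by
          rw [← ENNReal.ofReal_natCast]
          refine ENNReal.ofReal_le_ofReal ?_
          push_cast
          have := Nat.floor_le hLnn
          linarith
  simp only [hres]
  refine ne_of_lt (lt_of_le_of_lt ?_ hI)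
  rw [ENNReal.tsum_eq_iSup_sum]
  exact iSup_le hbound

lemma step_lemma {a b : ℝ} (Mt : ℝ → ℝ) (hMmeas : Measurable Mt) {v : ℂ → ℝ}
    (hsub : SubharmonicOn v (Rect a b)) (hvM : ∀ z ∈ Rect a b, v z ≤ Mt z.im)
    (n : ℕ) (z₀ : ℂ) (r : ℝ)
    (hr : 8 * (volume ({y | (2:ℝ)^n < Mt y} ∩ Set.Ioo (-b) b)).toReal / Real.pi < r)
    (hball : Metric.closedBall z₀ r ⊆ Rect a b)
    (hv0 : (2:ℝ)^(n+1) ≤ v z₀) :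
    ∃ w, dist w z₀ ≤ r ∧ (2:ℝ)^(n+2) ≤ v w := by
  set m := (volume ({y | (2:ℝ)^n < Mt y} ∩ Set.Ioo (-b) b)).toReal with hm
  have hmnn : 0 ≤ m := ENNReal.toReal_nonneg
  have hrpos : 0 < r := lt_of_le_of_lt (by positivity) hr
  by_contra hcon
  push_neg at hcon
  have hlt : ∀ w ∈ closedBall z₀ r, v w < (2:ℝ)^(n+2) := fun w hw =>
    hcon w (mem_closedBall.mp hw)
  have hmean := hsub.2 z₀ r hrpos hball
  set B := closedBall z₀ r with hB
  -- volume of B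
  have hvolB : (volume B).toReal = Real.pi * r^2 := by
    rw [hB, Complex.volume_closedBall]
    rw [ENNReal.toReal_mul, ENNReal.toReal_pow, ENNReal.toReal_ofReal hrpos.le]
    rw [ENNReal.coe_toReal, NNReal.coe_real_pi]
    ring
  have hvolBpos : 0 < (volume B).toReal := by rw [hvolB]; positivity
  by_cases hint : IntegrableOn v B
  · -- comparison function
    set S : Set ℂ := {w : ℂ | (2:ℝ)^n < Mt w.im} with hS
    have hSmeas : MeasurableSet S :=
      measurableSet_lt measurable_const (hMmeas.comp Complex.measurable_im)
    set g : ℂ → ℝ := fun w => (2:ℝ)^n + S.indicator (fun _ => (2:ℝ)^(n+2)) w with hg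
    have hptwise : ∀ w ∈ B, v w ≤ g w := by
      intro w hw
      have hwR : w ∈ Rect a b := hball hw
      by_cases hws : w ∈ S
      · have := hlt w hw
        simp only [hg, Set.indicator_of_mem hws]
        have : (0:ℝ) < (2:ℝ)^n := by positivity
        nlinarith [hlt w hw]
      · have hMle : Mt w.im ≤ (2:ℝ)^n := not_lt.mp hws
        simp only [hg, Set.indicator_of_notMem hws, add_zero]
        exact (hvM w hwR).trans hMle
    have hgint : IntegrableOn g B := by
      refine Integrable.add ?_ ?_
      · exact integrableOn_const (measure_closedBall_lt_top).ne
      · exact (integrableOn_const (C := (2:ℝ)^(n+2))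
          (measure_closedBall_lt_top).ne).indicator hSmeas
    have hIle : ∫ w in B, v w ≤ ∫ w in B, g w :=
      setIntegral_mono_on hint hgint measurableSet_closedBall hptwise
    -- compute integral of g
    have hSB : volume (B ∩ S) ≤ ENNReal.ofReal (2*r) *
        volume ({y | (2:ℝ)^n < Mt y} ∩ Set.Ioo (-b) b) := by
      have hsubset : B ∩ S ⊆ {z : ℂ | z.re ∈ Set.Icc (z₀.re - r) (z₀.re + r) ∧
          z.im ∈ ({y | (2:ℝ)^n < Mt y} ∩ Set.Ioo (-b) b)} := by
        rintro w ⟨hwB, hwS⟩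
        have hwR : w ∈ Rect a b := hball hwB
        have hre : |w.re - z₀.re| ≤ r := by
          have := Complex.abs_re_le_norm (w - z₀)
          simp only [Complex.sub_re] at this
          calc |w.re - z₀.re| ≤ ‖w - z₀‖ := this
          _ ≤ r := by rw [← Complex.dist_eq]; exact mem_closedBall.mp hwB
        rw [abs_sub_le_iff] at hre
        constructor
        · constructor <;> linarith [hre.1, hre.2]
        · refine ⟨hwS, ?_, ?_⟩ <;>
          · have := hwR.2
            rw [abs_lt] at this
            first | linarith [this.1] | linarith [this.2]
      calc volume (B ∩ S) ≤ _ := measure_mono hsubset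
      _ = volume (Set.Icc (z₀.re - r) (z₀.re + r)) *
          volume ({y | (2:ℝ)^n < Mt y} ∩ Set.Ioo (-b) b) := by
        exact vol_reim measurableSet_Icc
          ((measurableSet_lt measurable_const hMmeas).inter measurableSet_Ioo)
      _ = ENNReal.ofReal (2*r) * volume ({y | (2:ℝ)^n < Mt y} ∩ Set.Ioo (-b) b) := by
        rw [Real.volume_Icc]
        congr 1
        ring_nf
    have hSBfin : volume (B ∩ S) ≠ ∞ := by
      exact ne_of_lt (lt_of_le_of_lt (measure_mono Set.inter_subset_left)
        measure_closedBall_lt_top)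
    have hmeasIoo : volume ({y | (2:ℝ)^n < Mt y} ∩ Set.Ioo (-b) b) ≠ ∞ :=
      ne_of_lt (lt_of_le_of_lt (measure_mono Set.inter_subset_right) measure_Ioo_lt_top)
    have hSBreal : (volume (B ∩ S)).toReal ≤ 2 * r * m := by
      have := ENNReal.toReal_mono (by
        exact ENNReal.mul_ne_top ENNReal.ofReal_ne_top hmeasIoo) hSB
      rwa [ENNReal.toReal_mul, ENNReal.toReal_ofReal (by positivity)] at this
    have hIg : ∫ w in B, g w = (2:ℝ)^n * (volume B).toReal
        + (2:ℝ)^(n+2) * (volume (B ∩ S)).toReal := by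
      rw [hg]
      rw [integral_add (integrableOn_const (C := (2:ℝ)^n) (measure_closedBall_lt_top).ne)
        ((integrableOn_const (C := (2:ℝ)^(n+2))
          (measure_closedBall_lt_top).ne).indicator hSmeas)]
      rw [setIntegral_const, setIntegral_indicator hSmeas, setIntegral_const]
      simp only [smul_eq_mul, Measure.real]
      ring
    -- combine with the mean value inequality
    have havg : ⨍ w in B, v w = (volume B).toReal⁻¹ * ∫ w in B, v w := by
      rw [setAverage_eq]; simp [smul_eq_mul]; exact Or.inl rfl
    rw [havg] at hmean
    have hmean2 : (2:ℝ)^(n+1) * (volume B).toReal ≤ ∫ w in B, v w := by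
      have h1 : (2:ℝ)^(n+1) ≤ (volume B).toReal⁻¹ * ∫ w in B, v w := le_trans hv0 hmean
      calc (2:ℝ)^(n+1) * (volume B).toReal
          ≤ ((volume B).toReal⁻¹ * ∫ w in B, v w) * (volume B).toReal := by
            exact mul_le_mul_of_nonneg_right h1 hvolBpos.le
      _ = ∫ w in B, v w := by field_simp
    have hfinal : (2:ℝ)^(n+1) * (volume B).toReal ≤
        (2:ℝ)^n * (volume B).toReal + (2:ℝ)^(n+2) * (2 * r * m) := by
      calc (2:ℝ)^(n+1) * (volume B).toReal ≤ ∫ w in B, v w := hmean2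
      _ ≤ ∫ w in B, g w := hIle
      _ = (2:ℝ)^n * (volume B).toReal + (2:ℝ)^(n+2) * (volume (B ∩ S)).toReal := hIg
      _ ≤ _ := by
          have : (0:ℝ) < (2:ℝ)^(n+2) := by positivity
          nlinarith [hSBreal]
    rw [hvolB] at hfinal
    -- derive r ≤ 8 m / π, contradiction
    have hpi : (0:ℝ) < Real.pi := Real.pi_pos
    have h2n : (0:ℝ) < (2:ℝ)^n := by positivity
    have hrle : r ≤ 8 * m / Real.pi := by
      have hp1 : (2:ℝ)^(n+1) = 2 * (2:ℝ)^n := by ring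
      have hp2 : (2:ℝ)^(n+2) = 4 * (2:ℝ)^n := by ring
      rw [hp1, hp2] at hfinal
      -- 2*2^n*π r² ≤ 2^n π r² + 4*2^n*2 r m  ⇒ 2^n π r² ≤ 8*2^n r m ⇒ π r ≤ 8 m
      have h3 : Real.pi * r ≤ 8 * m := by
        by_contra hgt
        push_neg at hgt
        have hx := mul_lt_mul_of_pos_right hgt hrpos
        nlinarith [h2n, hfinal, hx]
      rw [div_eq_mul_inv, ← mul_le_mul_iff_left₀ hpi]
      calc r * Real.pi ≤ 8 * m := by linarith [h3]
      _ = 8 * m * Real.pi⁻¹ * Real.pi := by field_simp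
    linarith
  · -- v not integrable on B: average is 0
    have : ∫ w in B, v w = 0 := integral_undef hint
    rw [setAverage_eq, this] at hmean
    simp at hmean
    have : (0:ℝ) < (2:ℝ)^(n+1) := by positivity
    linarith

set_option maxHeartbeats 2000000 in
/-- Domar's lemma: a subharmonic function on a rectangle, dominated by a majorant `M̃(y)`
depending only on the imaginary part with `∫ log⁺ M̃ < ∞`, is bounded above on every compact
subset `K`, by a constant depending only on `M̃` (with its domain `(-b,b)`) and `d(K, ∂P)`. -/
theorem stmt0 (b : ℝ) (hb : 0 < b) (Mt : ℝ → ℝ) (hMmeas : Measurable Mt)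
    (hMint : IntegrableOn (fun y => logPlus (Mt y)) (Set.Ioo (-b) b))
    (δ : ℝ) (hδ : 0 < δ) :
    ∃ C : ℝ, ∀ (a : ℝ), 0 < a → ∀ v : ℂ → ℝ, SubharmonicOn v (Rect a b) →
      (∀ z ∈ Rect a b, v z ≤ Mt z.im) →
      ∀ K : Set ℂ, IsCompact K → K ⊆ Rect a b →
        (∀ z ∈ K, δ ≤ Metric.infDist z (Rect a b)ᶜ) →
        ∀ z ∈ K, v z ≤ C := by
  -- the radii
  set m : ℕ → ℝ := fun n => (volume ({y | (2:ℝ)^n < Mt y} ∩ Set.Ioo (-b) b)).toReal with hmdef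
  have hmsum : Summable m :=
    ENNReal.summable_toReal (sum_vol_ne_top b Mt hMmeas hMint)
  set ρ : ℕ → ℝ := fun n => 8 * m n / Real.pi + δ * (1/2)^(n+2) with hρdef
  have hρsum : Summable ρ := by
    refine Summable.add ?_ ?_
    · exact (hmsum.mul_left (8 / Real.pi)).congr (fun n => by ring)
    · exact (summable_nat_add_iff 2).mpr (summable_geometric_two.mul_left δ)
  have hρpos : ∀ n, 8 * m n / Real.pi < ρ n := by
    intro n
    have : (0:ℝ) < δ * (1/2)^(n+2) := by positivity
    simp only [hρdef]; linarith
  have hρnn : ∀ n, 0 ≤ ρ n := by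
    intro n
    have h1 : 0 ≤ 8 * m n / Real.pi := by positivity
    exact h1.trans (hρpos n).le
  -- choose n₀ with small tail
  have htail : Tendsto (fun i => ∑' k, ρ (k + i)) atTop (𝓝 0) := tendsto_sum_nat_add ρ
  obtain ⟨n₀, hn₀⟩ : ∃ n₀, ∑' k, ρ (k + n₀) < δ / 2 :=
    (htail.eventually (eventually_lt_nhds (show (0:ℝ) < δ/2 by positivity))).exists
  have hρshift : Summable fun j => ρ (n₀ + j) := by
    have := (summable_nat_add_iff n₀).mpr hρsum
    exact this.congr fun j => by rw [add_comm]
  have hn₀' : ∑' k, ρ (n₀ + k) < δ / 2 := by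
    have : ∑' k, ρ (n₀ + k) = ∑' k, ρ (k + n₀) := tsum_congr fun k => by rw [add_comm]
    rwa [this]
  have hsum_lt : ∀ k : ℕ, ∑ j ∈ Finset.range k, ρ (n₀ + j) < δ / 2 := by
    intro k
    calc ∑ j ∈ Finset.range k, ρ (n₀ + j) ≤ ∑' j, ρ (n₀ + j) :=
          Summable.sum_le_tsum (Finset.range k) (fun j _ => hρnn _) hρshift
    _ < δ / 2 := hn₀'
  refine ⟨(2:ℝ)^(n₀+1), ?_⟩
  intro a ha v hsub hvM K hK hKP hKδ z hz
  by_contra hC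
  push_neg at hC
  have hinfd : ∀ {w : ℂ} {s : ℝ}, dist w z ≤ s → s < δ/2 → δ/2 < infDist w (Rect a b)ᶜ := by
    intro w s h1 h2
    have h3 := hKδ z hz
    have h4 : infDist z (Rect a b)ᶜ ≤ infDist w (Rect a b)ᶜ + dist z w :=
      infDist_le_infDist_add_dist
    rw [dist_comm] at h4
    linarith
  -- the recursive step
  have key : ∀ (k : ℕ) (w : ℂ), δ / 2 < infDist w (Rect a b)ᶜ →
      (2:ℝ)^(n₀+k+1) ≤ v w → ∃ w', dist w' w ≤ ρ (n₀+k) ∧ (2:ℝ)^(n₀+k+2) ≤ v w' := by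
    intro k w hwd hwv
    have hρle : ρ (n₀+k) ≤ ∑' j, ρ (n₀ + j) := Summable.le_tsum hρshift k (fun j _ => hρnn _)
    have hrlt : ρ (n₀+k) < infDist w (Rect a b)ᶜ :=
      lt_of_le_of_lt hρle (lt_trans hn₀' hwd)
    have hball : closedBall w (ρ (n₀+k)) ⊆ Rect a b := by
      intro w' hw'
      by_contra hw'n
      have h5 : infDist w (Rect a b)ᶜ ≤ dist w w' := infDist_le_dist_of_mem hw'n
      rw [dist_comm] at h5
      have := mem_closedBall.mp hw'
      linarith
    exact step_lemma Mt hMmeas hsub hvM (n₀+k) w (ρ (n₀+k)) (hρpos (n₀+k)) hball hwv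
  choose! next hd hv using key
  set zs : ℕ → ℂ := fun k => Nat.rec z (fun k w => next k w) k with hzs
  have hzs0 : zs 0 = z := rfl
  have hzssucc : ∀ k, zs (k+1) = next k (zs k) := fun k => rfl
  have inv : ∀ k, (2:ℝ)^(n₀+k+1) ≤ v (zs k) ∧
      dist (zs k) z ≤ ∑ j ∈ Finset.range k, ρ (n₀ + j) := by
    intro k
    induction k with
    | zero =>
      refine ⟨by rw [hzs0]; simpa using hC.le, by simp [hzs0]⟩
    | succ k ih =>
      have hinfk : δ/2 < infDist (zs k) (Rect a b)ᶜ := hinfd ih.2 (hsum_lt k)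
      have hdk := hd k (zs k) hinfk ih.1
      have hvk := hv k (zs k) hinfk ih.1
      constructor
      · rw [hzssucc]
        have he : n₀ + (k+1) + 1 = n₀ + k + 2 := by omega
        rw [he]
        exact hvk
      · rw [hzssucc]
        calc dist (next k (zs k)) z ≤ dist (next k (zs k)) (zs k) + dist (zs k) z :=
              dist_triangle _ _ _
        _ ≤ ρ (n₀ + k) + ∑ j ∈ Finset.range k, ρ (n₀ + j) := add_le_add hdk ih.2
        _ = ∑ j ∈ Finset.range (k+1), ρ (n₀ + j) := by
            rw [Finset.sum_range_succ]; ring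
  have hinfk : ∀ k, δ/2 < infDist (zs k) (Rect a b)ᶜ := fun k =>
    hinfd (inv k).2 (hsum_lt k)
  have hdist : ∀ k, dist (zs k) (zs (k+1)) ≤ ρ (n₀ + k) := by
    intro k
    rw [dist_comm, hzssucc]
    exact hd k (zs k) (hinfk k) (inv k).1
  have hcauchy : CauchySeq zs :=
    cauchySeq_of_dist_le_of_summable (fun k => ρ (n₀ + k)) hdist hρshift
  obtain ⟨zlim, hzlim⟩ := cauchySeq_tendsto_of_complete hcauchy
  have hcont : Tendsto (fun k => infDist (zs k) (Rect a b)ᶜ) atTop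
      (𝓝 (infDist zlim (Rect a b)ᶜ)) :=
    ((continuous_infDist_pt ((Rect a b)ᶜ)).continuousAt).tendsto.comp hzlim
  have hinflim : δ/2 ≤ infDist zlim (Rect a b)ᶜ :=
    ge_of_tendsto hcont (Eventually.of_forall fun k => (hinfk k).le)
  have hzlimRect : zlim ∈ Rect a b := by
    by_contra h
    have : infDist zlim (Rect a b)ᶜ = 0 := infDist_zero_of_mem h
    linarith
  have hmem : ∀ k, zs k ∈ Rect a b := by
    intro k
    by_contra h
    have : infDist (zs k) (Rect a b)ᶜ = 0 := infDist_zero_of_mem h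
    linarith [hinfk k]
  have husc := hsub.1 zlim hzlimRect (v zlim + 1) (lt_add_one _)
  have htends : Tendsto zs atTop (𝓝[Rect a b] zlim) :=
    tendsto_nhdsWithin_of_tendsto_nhds_of_eventually_within zs hzlim
      (Eventually.of_forall hmem)
  have h1 : ∀ᶠ k in atTop, v (zs k) < v zlim + 1 := htends.eventually husc
  have h2 : ∀ᶠ k in atTop, v zlim + 1 < (2:ℝ)^(n₀+k+1) := by
    have hmono : Tendsto (fun k : ℕ => n₀ + k + 1) atTop atTop :=
      tendsto_atTop_mono (fun k => le_trans (Nat.le_add_left k n₀) (Nat.le_succ _)) tendsto_id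
    have hpow : Tendsto (fun k : ℕ => (2:ℝ)^(n₀+k+1)) atTop atTop :=
      (tendsto_pow_atTop_atTop_of_one_lt one_lt_two).comp hmono
    exact hpow.eventually_gt_atTop _
  obtain ⟨k, hk1, hk2⟩ := (h1.and h2).exists
  linarith [(inv k).1]
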